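/- The Dunkl Szász–Kantorovich–Stancu operators T_n* satisfy T_n*(1;x) = 1 and T_n*(t;x) = (n/(n+β))x + (α + 1/2)/(n+β) for all x ≥ 0 and n ∈ ℕ. -/

import Mathlib

noncomputable section

/-- θ_k = 0 if k even, 1 if k odd. -/
def theta (k : ℕ) : ℝ := if Even k then 0 else 1

/-- Dunkl coefficients γ_μ(n). -/
def gammaD (mu : ℝ) (n : ℕ) : ℝ :=
  if Even n then
    2 ^ n * (Nat.factorial (n / 2)) * Real.Gamma ((n / 2 : ℕ) + mu + 1 / 2) / Real.Gamma (mu + 1 / 2)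
  else
    2 ^ n * (Nat.factorial (n / 2)) * Real.Gamma ((n / 2 : ℕ) + mu + 3 / 2) / Real.Gamma (mu + 1 / 2)

/-- Dunkl exponential e_μ(x) = Σ xⁿ/γ_μ(n). -/
def eD (mu x : ℝ) : ℝ := ∑' n : ℕ, x ^ n / gammaD mu n

/-- r_n(x) = x - 1/(2n). -/
def rn (n : ℕ) (x : ℝ) : ℝ := x - 1 / (2 * n)

/-- Modified Dunkl Szász–Mirakjan–Kantorovich operator K_n. -/
def Kn (mu : ℝ) (n : ℕ) (f : ℝ → ℝ) (x : ℝ) : ℝ :=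
  (n / eD mu (n * rn n x)) * ∑' k : ℕ, (n * rn n x) ^ k / gammaD mu k *
    ∫ t in (((k : ℝ) + 2 * mu * theta k) / n)..(((k : ℝ) + 1 + 2 * mu * theta k) / n), f t

/-- Stancu-type modified Dunkl Szász–Kantorovich operator K_n^*. -/
def KnStar (mu a b : ℝ) (n : ℕ) (f : ℝ → ℝ) (x : ℝ) : ℝ :=
  (n / eD mu (n * rn n x)) * ∑' k : ℕ, (n * rn n x) ^ k / gammaD mu k *
    ∫ t in (((k : ℝ) + 2 * mu * theta k) / n)..(((k : ℝ) + 1 + 2 * mu * theta k) / n),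
      f ((n * t + a) / (n + b))

/-- Dunkl Szász–Kantorovich–Stancu operator T_n^*. -/
def TnStar (mu a b : ℝ) (n : ℕ) (f : ℝ → ℝ) (x : ℝ) : ℝ :=
  (n / eD mu (n * x)) * ∑' k : ℕ, (n * x) ^ k / gammaD mu k *
    ∫ t in (((k : ℝ) + 2 * mu * theta k) / n)..(((k : ℝ) + 1 + 2 * mu * theta k) / n),
      f ((n * t + a) / (n + b))

/-- Modulus of continuity of f on [0,∞). -/
def modCont (f : ℝ → ℝ) (d : ℝ) : ℝ :=
  sSup {y | ∃ t s : ℝ, 0 ≤ t ∧ 0 ≤ s ∧ |t - s| ≤ d ∧ y = |f t - f s|}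

lemma theta_nonneg (k : ℕ) : 0 ≤ theta k := by
  unfold theta; split <;> norm_num

lemma gammaD_zero (mu : ℝ) (hmu : 0 ≤ mu) : gammaD mu 0 = 1 := by
  have h : Real.Gamma (mu + 1 / 2) ≠ 0 :=
    (Real.Gamma_pos_of_pos (by linarith)).ne'
  simp [gammaD]
  rw [show mu + 2⁻¹ = mu + 1/2 by norm_num]
  exact h

lemma gammaD_succ (mu : ℝ) (hmu : 0 ≤ mu) (k : ℕ) :
    gammaD mu (k + 1) = ((k : ℝ) + 1 + 2 * mu * theta (k + 1)) * gammaD mu k := by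
  rcases Nat.even_or_odd k with ⟨m, rfl⟩ | ⟨m, rfl⟩
  · have h1 : (m + m + 1) / 2 = m := by omega
    have h2 : (m + m) / 2 = m := by omega
    have he : Even (m + m) := ⟨m, rfl⟩
    have ho : ¬ Even (m + m + 1) := by simp [Nat.even_add_one, he]
    have hG : Real.Gamma ((m : ℝ) + mu + 3 / 2) =
        ((m : ℝ) + mu + 1 / 2) * Real.Gamma ((m : ℝ) + mu + 1 / 2) := by
      rw [show (m : ℝ) + mu + 3 / 2 = ((m : ℝ) + mu + 1 / 2) + 1 by ring,
        Real.Gamma_add_one (by positivity)]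
    simp only [gammaD, theta, h1, h2, if_neg ho, if_pos he, hG]
    push_cast
    ring
  · have h1 : (2 * m + 1 + 1) / 2 = m + 1 := by omega
    have h2 : (2 * m + 1) / 2 = m := by omega
    have he : Even (2 * m + 1 + 1) := ⟨m + 1, by ring⟩
    have ho : ¬ Even (2 * m + 1) := by simp [Nat.even_add_one, parity_simps]
    simp only [gammaD, theta, h1, h2, if_pos he, if_neg ho]
    rw [show ((m + 1 : ℕ) : ℝ) + mu + 1 / 2 = (m : ℝ) + mu + 3 / 2 by push_cast; ring]
    push_cast [Nat.factorial_succ]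
    ring

lemma gammaD_pos (mu : ℝ) (hmu : 0 ≤ mu) (k : ℕ) : 0 < gammaD mu k := by
  induction k with
  | zero => rw [gammaD_zero mu hmu]; norm_num
  | succ k ih =>
    rw [gammaD_succ mu hmu]
    have h1 := theta_nonneg (k + 1)
    have hk : (0:ℝ) ≤ (k : ℝ) := Nat.cast_nonneg k
    have h2 : 0 < (k : ℝ) + 1 + 2 * mu * theta (k + 1) := by nlinarith [mul_nonneg hmu h1]
    exact mul_pos h2 ih

lemma factorial_le_gammaD (mu : ℝ) (hmu : 0 ≤ mu) (k : ℕ) :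
    (Nat.factorial k : ℝ) ≤ gammaD mu k := by
  induction k with
  | zero => simp [gammaD_zero mu hmu]
  | succ k ih =>
    rw [gammaD_succ mu hmu]
    have h1 : ((k : ℝ) + 1) ≤ (k : ℝ) + 1 + 2 * mu * theta (k + 1) := by
      have := theta_nonneg (k + 1); nlinarith
    have h2 : (0:ℝ) ≤ (Nat.factorial k : ℝ) := Nat.cast_nonneg _
    push_cast [Nat.factorial_succ]
    nlinarith [gammaD_pos mu hmu k]

lemma summable_eD (mu : ℝ) (hmu : 0 ≤ mu) (y : ℝ) (hy : 0 ≤ y) :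
    Summable (fun k : ℕ => y ^ k / gammaD mu k) := by
  apply Summable.of_nonneg_of_le
    (fun k => div_nonneg (pow_nonneg hy k) (gammaD_pos mu hmu k).le)
    (fun k => ?_) (Real.summable_pow_div_factorial y)
  have h1 : (0:ℝ) < Nat.factorial k := by exact_mod_cast Nat.factorial_pos k
  exact div_le_div_of_nonneg_left (pow_nonneg hy k) h1 (factorial_le_gammaD mu hmu k)

lemma eD_pos (mu : ℝ) (hmu : 0 ≤ mu) (y : ℝ) (hy : 0 ≤ y) : 0 < eD mu y := by
  have h1 : (1:ℝ) ≤ eD mu y := by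
    have := Summable.le_tsum (summable_eD mu hmu y hy) 0
      (fun k _ => div_nonneg (pow_nonneg hy k) (gammaD_pos mu hmu k).le)
    simpa [gammaD_zero mu hmu, eD] using this
  linarith

theorem TnStar_one_and_id (mu a b : ℝ) (hmu : 0 ≤ mu) (ha : 0 ≤ a) (hab : a ≤ b)
    (n : ℕ) (hn : 0 < n) (x : ℝ) (hx : 0 ≤ x) :
    TnStar mu a b n (fun _ => 1) x = 1 ∧
    TnStar mu a b n (fun t => t) x = (n / (n + b)) * x + (a + 1 / 2) / (n + b) := by
  have hnR : (0:ℝ) < n := Nat.cast_pos.mpr hn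
  have hnb : (0:ℝ) < n + b := by linarith
  have hy : (0:ℝ) ≤ (n:ℝ) * x := by positivity
  have heD : 0 < eD mu ((n:ℝ) * x) := eD_pos mu hmu _ hy
  have hsum : Summable (fun k : ℕ => ((n:ℝ) * x) ^ k / gammaD mu k) := summable_eD mu hmu _ hy
  have heq : (∑' k : ℕ, ((n:ℝ) * x) ^ k / gammaD mu k) = eD mu ((n:ℝ) * x) := rfl
  constructor
  · unfold TnStar
    have h1 : ∀ k : ℕ,
        (∫ _t in (((k : ℝ) + 2 * mu * theta k) / n)..(((k : ℝ) + 1 + 2 * mu * theta k) / n),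
          (1:ℝ)) = 1 / n := by
      intro k
      rw [intervalIntegral.integral_const, smul_eq_mul, mul_one, div_sub_div_same]
      norm_num
    simp_rw [h1]
    rw [tsum_mul_right, heq]
    field_simp
  · unfold TnStar
    have hInt : ∀ l u : ℝ, (∫ t in l..u, ((n:ℝ) * t + a) / ((n:ℝ) + b))
        = ((n:ℝ) * (u ^ 2 - l ^ 2) / 2 + a * (u - l)) / ((n:ℝ) + b) := by
      intro l u
      rw [intervalIntegral.integral_div]
      congr 1
      rw [intervalIntegral.integral_add (show IntervalIntegrable (fun t : ℝ => (n:ℝ) * t) MeasureTheory.volume l u from (continuous_const.mul continuous_id').intervalIntegrable _ _)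
        intervalIntegrable_const, intervalIntegral.integral_const_mul, integral_id,
        intervalIntegral.integral_const, smul_eq_mul]
      ring
    have h2 : ∀ k : ℕ, ((n:ℝ) * x) ^ k / gammaD mu k *
        (∫ t in (((k : ℝ) + 2 * mu * theta k) / n)..(((k : ℝ) + 1 + 2 * mu * theta k) / n),
          ((n:ℝ) * t + a) / ((n:ℝ) + b))
        = (((n:ℝ) * x) ^ k * ((k : ℝ) + 2 * mu * theta k) / gammaD mu k
            + (a + 1 / 2) * (((n:ℝ) * x) ^ k / gammaD mu k)) * (1 / ((n:ℝ) * ((n:ℝ) + b))) := by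
      intro k
      rw [hInt]
      have hg := gammaD_pos mu hmu k
      field_simp
      ring
    simp_rw [h2]
    have hgs : ∀ k : ℕ, ((n:ℝ) * x) ^ (k + 1) * (((k:ℝ) + 1) + 2 * mu * theta (k + 1)) /
          gammaD mu (k + 1)
        = ((n:ℝ) * x) * (((n:ℝ) * x) ^ k / gammaD mu k) := by
      intro k
      rw [gammaD_succ mu hmu k]
      have hg := gammaD_pos mu hmu k
      have hc : (0:ℝ) < (k : ℝ) + 1 + 2 * mu * theta (k + 1) := by
        nlinarith [mul_nonneg hmu (theta_nonneg (k + 1)), Nat.cast_nonneg (α := ℝ) k]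
      rw [pow_succ]
      field_simp
    have hg1 : Summable (fun k : ℕ =>
        ((n:ℝ) * x) ^ (k + 1) * (((k:ℝ) + 1) + 2 * mu * theta (k + 1)) / gammaD mu (k + 1)) := by
      simp_rw [hgs]; exact hsum.mul_left _
    have hg : Summable (fun k : ℕ =>
        ((n:ℝ) * x) ^ k * ((k:ℝ) + 2 * mu * theta k) / gammaD mu k) := by
      apply (summable_nat_add_iff 1).mp
      convert hg1 using 2 with k
      · rfl
      push_cast
      ring_nf
    have htsumg : (∑' k : ℕ, ((n:ℝ) * x) ^ k * ((k:ℝ) + 2 * mu * theta k) / gammaD mu k)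
        = ((n:ℝ) * x) * eD mu ((n:ℝ) * x) := by
      have hc : ∀ k : ℕ, ((n:ℝ) * x) ^ (k + 1) * (((k + 1 : ℕ):ℝ) + 2 * mu * theta (k + 1)) /
          gammaD mu (k + 1) = ((n:ℝ) * x) * (((n:ℝ) * x) ^ k / gammaD mu k) := by
        intro k; rw [← hgs k]; push_cast; ring_nf
      rw [Summable.tsum_eq_zero_add hg]
      simp_rw [hc]
      rw [tsum_mul_left, heq]
      simp [theta]
    rw [tsum_mul_right, Summable.tsum_add hg (hsum.mul_left _), htsumg, tsum_mul_left, heq]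
    field_simp
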